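/- arXiv:2001.11098 — 2 statements merged into one kernel-verified Lean document; each statement's English description precedes it below -/
import Mathlib

section
/- Let 0 < λ ≤ 1 and let f ∈ 𝒢(λ) with f' not identically equal to 1. Then there exists an integer n ≥ 1 such that f'(z) ≺ (1 + z^n)^{λ/n} on 𝔻. -/
open Complex Metric Set

/-- Derivative of `t ↦ normSq (c t)` for a real-parameter path. -/
lemma normSq_hasDerivAt {c : ℝ → ℂ} {c' : ℂ} {t : ℝ} (h : HasDerivAt c c' t) :
    HasDerivAt (fun s => Complex.normSq (c s))
      (2 * ((c t).re * c'.re + (c t).im * c'.im)) t := by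
  have hre : HasDerivAt (fun s => (c s).re) c'.re t := by
    exact (Complex.reCLM.hasFDerivAt.comp_hasDerivAt t h)
  have him : HasDerivAt (fun s => (c s).im) c'.im t := by
    exact (Complex.imCLM.hasFDerivAt.comp_hasDerivAt t h)
  have := (hre.mul hre).add (him.mul him)
  simp only [Complex.normSq_apply]
  exact this.congr_deriv (by ring)

/-- Existence of a holomorphic logarithm on the unit ball. -/
lemma exists_log {p : ℂ → ℂ} (hp : DifferentiableOn ℂ p (ball 0 1))
    (hp0 : p 0 = 1) (hpne : ∀ z ∈ ball (0:ℂ) 1, p z ≠ 0) :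
    ∃ g : ℂ → ℂ, DifferentiableOn ℂ g (ball 0 1) ∧ g 0 = 0 ∧
      ∀ z ∈ ball (0:ℂ) 1, Complex.exp (g z) = p z := by
  have hOpen : IsOpen (ball (0:ℂ) 1) := isOpen_ball
  set q : ℂ → ℂ := fun w => deriv p w / p w with hqdef
  have hpderiv : DifferentiableOn ℂ (deriv p) (ball 0 1) :=
    ((hp.analyticOnNhd hOpen).deriv).differentiableOn
  have hq : ContinuousOn q (ball 0 1) :=
    (hpderiv.continuousOn).div hp.continuousOn hpne
  -- clamp
  set cl : ℝ → ℝ := fun t => max 0 (min t 1) with hcldef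
  have hclcont : Continuous cl := continuous_const.max (continuous_id.min continuous_const)
  have hclmem : ∀ t, cl t ∈ Icc (0:ℝ) 1 := fun t =>
    ⟨le_max_left _ _, max_le (by norm_num) (min_le_right _ _)⟩
  have hcleq : ∀ t ∈ Ico (0:ℝ) 1, cl t = t := fun t ht => by
    simp only [hcldef]
    rw [min_eq_left ht.2.le, max_eq_right ht.1]
  have hmem : ∀ (z : ℂ), z ∈ ball (0:ℂ) 1 → ∀ t : ℝ, t ∈ Icc (0:ℝ) 1 →
      ((t:ℂ) * z) ∈ ball (0:ℂ) 1 := by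
    intro z hz t ht
    rw [mem_ball_zero_iff] at hz ⊢
    calc ‖(t:ℂ) * z‖ = |t| * ‖z‖ := by
          rw [norm_mul, Complex.norm_real, Real.norm_eq_abs]
      _ ≤ 1 * ‖z‖ := by
          apply mul_le_mul_of_nonneg_right _ (norm_nonneg z)
          rw [abs_le]; exact ⟨le_trans (by norm_num) ht.1, ht.2⟩
      _ < 1 := by rwa [one_mul]
  set g : ℂ → ℂ := fun z => ∫ t in (0:ℝ)..1, z * q ((cl t : ℂ) * z) with hgdef
  have hg0 : g 0 = 0 := by simp [hgdef]
  -- pointwise exp (g z) = p z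
  have hpg : ∀ z ∈ ball (0:ℂ) 1, Complex.exp (g z) = p z := by
    intro z hz
    set h : ℝ → ℂ := fun s => z * q ((cl s : ℂ) * z) with hhdef
    have hhc : Continuous h := by
      apply continuous_const.mul
      apply hq.comp_continuous
        ((Complex.continuous_ofReal.comp hclcont).mul continuous_const)
      intro s
      exact hmem z hz (cl s) (hclmem s)
    set I : ℝ → ℂ := fun t => ∫ s in (0:ℝ)..t, h s with hIdef
    have hI : ∀ t : ℝ, HasDerivAt I (h t) t := by
      intro t
      exact intervalIntegral.integral_hasDerivAt_right
        (hhc.intervalIntegrable _ _)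
        (hhc.stronglyMeasurableAtFilter _ _)
        hhc.continuousAt
    set u : ℝ → ℂ := fun t => Complex.exp (-I t) * p ((t:ℂ) * z) with hudef
    have hucont : ContinuousOn u (Icc 0 1) := by
      apply ContinuousOn.mul
      · exact ((Complex.continuous_exp.comp
          (Continuous.neg (by
            exact continuous_iff_continuousAt.2 fun t => (hI t).continuousAt)))).continuousOn
      · exact hp.continuousOn.comp
          ((Complex.continuous_ofReal.mul continuous_const).continuousOn)
          (fun t ht => hmem z hz t ht)
    have huderiv : ∀ t ∈ Ico (0:ℝ) 1, HasDerivWithinAt u 0 (Ici t) t := by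
      intro t ht
      have htz : ((t:ℂ) * z) ∈ ball (0:ℂ) 1 := hmem z hz t ⟨ht.1, ht.2.le⟩
      have hpt : HasDerivAt (fun s : ℝ => p ((s:ℂ) * z)) (deriv p ((t:ℂ)*z) * z) t := by
        have h1 : HasDerivAt p (deriv p ((t:ℂ)*z)) ((t:ℂ)*z) :=
          (hp.differentiableAt (hOpen.mem_nhds htz)).hasDerivAt
        have h2 : HasDerivAt (fun w : ℂ => w * z) z (t:ℂ) := hasDerivAt_mul_const z
        have h3 := (HasDerivAt.comp (((t:ℝ):ℂ)) h1 h2).comp_ofReal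
        simpa [Function.comp] using h3
      have hIt : HasDerivAt I (z * q ((t:ℂ)*z)) t := by
        simpa only [hhdef, hcleq t ht] using hI t
      have hexp : HasDerivAt (fun s => Complex.exp (-I s))
          (Complex.exp (-I t) * (-(z * q ((t:ℂ)*z)))) t := (hIt.neg).cexp
      have := (hexp.mul hpt)
      have heq : Complex.exp (-I t) * -(z * q ((t:ℂ) * z)) * p ((t:ℂ)*z)
          + Complex.exp (-I t) * (deriv p ((t:ℂ)*z) * z) = 0 := by
        rw [hqdef]
        field_simp [hpne _ htz]
        rw [div_self (hpne (z * (t:ℂ)) (by rwa [mul_comm]))]; ring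
      rw [heq] at this
      exact this.hasDerivWithinAt
    have hconst := constant_of_has_deriv_right_zero hucont huderiv 1 (by norm_num)
    have hu0 : u 0 = 1 := by
      simp [hudef, hIdef, hp0]
    have hu1 : u 1 = Complex.exp (-g z) * p z := by
      simp only [hudef, hIdef, hgdef, hhdef]
      norm_num
    rw [hu1, hu0] at hconst
    have := congrArg (fun w => Complex.exp (g z) * w) hconst
    simp only [mul_one] at this
    rw [← mul_assoc, ← Complex.exp_add] at this
    simpa using this.symm
  -- continuity of g on the ball
  have hgcont : ContinuousOn g (ball (0:ℂ) 1) := by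
    rw [continuousOn_iff_continuous_restrict]
    have : Continuous (Function.uncurry
        (fun (x : ↥(ball (0:ℂ) 1)) (s : ℝ) => (x:ℂ) * q ((cl s : ℂ) * (x:ℂ)))) := by
      apply Continuous.mul (continuous_subtype_val.comp continuous_fst)
      apply hq.comp_continuous
      · exact ((Complex.continuous_ofReal.comp (hclcont.comp continuous_snd)).mul
          (continuous_subtype_val.comp continuous_fst))
      · rintro ⟨⟨x, hx⟩, s⟩
        exact hmem x hx (cl s) (hclmem s)
    exact intervalIntegral.continuous_parametric_intervalIntegral_of_continuous' this 0 1
  -- differentiability of g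
  have hgdiff : DifferentiableOn ℂ g (ball (0:ℂ) 1) := by
    intro z₀ hz₀
    have hczero : ContinuousAt g z₀ := hgcont.continuousAt (hOpen.mem_nhds hz₀)
    have hev : g =ᶠ[nhds z₀] (fun z => g z₀ + Complex.log (p z / p z₀)) := by
      have h1 : g ⁻¹' (ball (g z₀) Real.pi) ∈ nhds z₀ :=
        hczero.tendsto (Metric.ball_mem_nhds _ Real.pi_pos)
      filter_upwards [h1, hOpen.mem_nhds hz₀] with z hznear hzball
      rw [Set.mem_preimage, mem_ball, Complex.dist_eq] at hznear
      rw [show ‖g z - g z₀‖ = ‖g z - g z₀‖ from rfl] at hznear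
      have hexp : p z / p z₀ = Complex.exp (g z - g z₀) := by
        rw [Complex.exp_sub, hpg z hzball, hpg z₀ hz₀]
      rw [hexp, Complex.log_exp]
      · ring
      · have h2 := Complex.abs_im_le_norm (g z - g z₀)
        exact (abs_lt.1 (lt_of_le_of_lt h2 hznear)).1
      · have h2 := Complex.abs_im_le_norm (g z - g z₀)
        exact (abs_lt.1 (lt_of_le_of_lt h2 hznear)).2.le
    have hdiff2 : DifferentiableAt ℂ (fun z => g z₀ + Complex.log (p z / p z₀)) z₀ := by
      apply DifferentiableAt.add (differentiableAt_const _)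
      apply DifferentiableAt.clog
      · exact (hp.differentiableAt (hOpen.mem_nhds hz₀)).div_const _
      · rw [div_self (hpne z₀ hz₀)]
        exact Complex.one_mem_slitPlane
    exact (hev.differentiableAt_iff.2 hdiff2).differentiableWithinAt
  exact ⟨g, hgdiff, hg0, hpg⟩

/-- `p ≺ q` on the unit disk: there is an analytic `ω : 𝔻 → 𝔻` with `ω 0 = 0`
and `p = q ∘ ω` on `𝔻`. -/
def Subord (p q : ℂ → ℂ) : Prop :=
  ∃ ω : ℂ → ℂ, DifferentiableOn ℂ ω (ball 0 1) ∧
    Set.MapsTo ω (ball 0 1) (ball 0 1) ∧ ω 0 = 0 ∧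
    ∀ z ∈ ball (0:ℂ) 1, p z = q (ω z)

set_option maxHeartbeats 1600000 in
/-- Let `0 < λ ≤ 1` and `f ∈ 𝒢(λ)` with `f'` not identically `1` on `𝔻`.
Then there is an integer `n ≥ 1` with `f' ≺ (1 + z^n)^{λ/n}` on `𝔻`. -/
theorem stmt3 (lam : ℝ) (hlam0 : 0 < lam) (hlam1 : lam ≤ 1)
    (f : ℂ → ℂ)
    (hf : DifferentiableOn ℂ f (ball 0 1))
    (hf0 : f 0 = 0) (hfd0 : deriv f 0 = 1)
    (hfd : ∀ z ∈ ball (0:ℂ) 1, deriv f z ≠ 0)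
    (hG : ∀ z ∈ ball (0:ℂ) 1,
      (1 + z * deriv (deriv f) z / deriv f z).re < 1 + lam / 2)
    (hne1 : ¬ (∀ z ∈ ball (0:ℂ) 1, deriv f z = 1)) :
    ∃ n : ℕ, 1 ≤ n ∧
      Subord (deriv f)
        (fun z => Complex.exp (((lam / n : ℝ) : ℂ) * Complex.log (1 + z ^ n))) := by
  have hOpen : IsOpen (ball (0:ℂ) 1) := isOpen_ball
  have hpd : DifferentiableOn ℂ (deriv f) (ball 0 1) :=
    ((hf.analyticOnNhd hOpen).deriv).differentiableOn
  obtain ⟨g, hgdiff, hg0, hpg⟩ := exists_log hpd hfd0 hfd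
  have hlamne : ((lam:ℝ):ℂ) ≠ 0 := Complex.ofReal_ne_zero.2 (ne_of_gt hlam0)
  -- derivative of g
  have hgd : ∀ z ∈ ball (0:ℂ) 1, HasDerivAt g (deriv (deriv f) z / deriv f z) z := by
    intro z hz
    have hgz : HasDerivAt g (deriv g z) z :=
      (hgdiff.differentiableAt (hOpen.mem_nhds hz)).hasDerivAt
    have hev : (deriv f) =ᶠ[nhds z] (fun w => Complex.exp (g w)) :=
      Filter.eventuallyEq_of_mem (hOpen.mem_nhds hz) (fun w hw => (hpg w hw).symm)
    have hP : HasDerivAt (deriv f) (Complex.exp (g z) * deriv g z) z :=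
      (hgz.cexp).congr_of_eventuallyEq hev
    have hval : deriv (deriv f) z = Complex.exp (g z) * deriv g z := hP.deriv
    have heq : deriv g z = deriv (deriv f) z / deriv f z := by
      rw [eq_div_iff (hfd z hz), hval, hpg z hz]
      ring
    rw [← heq]
    exact hgz
  -- the real-part hypothesis, rescaled
  have hzG : ∀ z ∈ ball (0:ℂ) 1,
      (z * (deriv (deriv f) z / deriv f z / (lam:ℂ))).re < 1/2 := by
    intro z hz
    have h1 := hG z hz
    rw [Complex.add_re, Complex.one_re] at h1
    have h2 : (z * deriv (deriv f) z / deriv f z).re < lam / 2 := by linarith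
    have h3 : z * (deriv (deriv f) z / deriv f z / (lam:ℂ))
        = (z * deriv (deriv f) z / deriv f z) / (lam:ℂ) := by ring
    rw [h3, Complex.div_ofReal]
    show (z * deriv (deriv f) z / deriv f z).re / lam < 1/2
    rw [div_lt_iff₀ hlam0]
    linarith
  set G : ℂ → ℂ := fun z => g z / (lam:ℂ) with hGdef
  set F : ℂ → ℂ := fun z => Complex.exp (G z) - 1 with hFdef
  have hGat : ∀ z ∈ ball (0:ℂ) 1,
      HasDerivAt G (deriv (deriv f) z / deriv f z / (lam:ℂ)) z :=
    fun z hz => (hgd z hz).div_const _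
  have hFat : ∀ z ∈ ball (0:ℂ) 1,
      HasDerivAt F (Complex.exp (G z) * (deriv (deriv f) z / deriv f z / (lam:ℂ))) z :=
    fun z hz => ((hGat z hz).cexp).sub_const 1
  have hFdiff : DifferentiableOn ℂ F (ball 0 1) :=
    fun z hz => ((hFat z hz).differentiableAt).differentiableWithinAt
  have hG0 : G 0 = 0 := by simp [hGdef, hg0]
  have hF0 : F 0 = 0 := by simp [hFdef, hG0]
  have hexpG : ∀ z, 1 + F z = Complex.exp (G z) := by
    intro z; simp only [hFdef]; ring
  have hGdiffOn : DifferentiableOn ℂ G (ball 0 1) := hgdiff.div_const _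
  -- the key bound |F| < 1 on the ball
  have hF1 : ∀ z ∈ ball (0:ℂ) 1, ‖F z‖ < 1 := by
    by_contra hcon
    push_neg at hcon
    obtain ⟨z₁, hz₁, h1⟩ := hcon
    have hr₁1 : ‖z₁‖ < 1 := by
      rwa [mem_ball_zero_iff] at hz₁
    have hcb : closedBall (0:ℂ) (‖z₁‖) ⊆ ball 0 1 := closedBall_subset_ball hr₁1
    have hFcont : ContinuousOn F (ball 0 1) := hFdiff.continuousOn
    set S : Set ℂ :=
      closedBall (0:ℂ) (‖z₁‖) ∩ (fun z => ‖F z‖) ⁻¹' (Ici 1) with hSdef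
    have hSclosed : IsClosed S :=
      ContinuousOn.preimage_isClosed_of_isClosed
        (continuous_norm.comp_continuousOn (hFcont.mono hcb))
        Metric.isClosed_closedBall isClosed_Ici
    have hScpt : IsCompact S :=
      (isCompact_closedBall (0:ℂ) _).of_isClosed_subset hSclosed Set.inter_subset_left
    have hz₁S : z₁ ∈ S := by
      constructor
      · rw [mem_closedBall_zero_iff]
      · exact h1
    obtain ⟨z₀, hz₀S, hz₀min⟩ :=
      hScpt.exists_isMinOn ⟨z₁, hz₁S⟩ (continuous_norm.continuousOn)
    have hz₀D : z₀ ∈ ball (0:ℂ) 1 := hcb hz₀S.1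
    have hr₀1 : ‖z₀‖ < 1 := by
      rwa [mem_ball_zero_iff] at hz₀D
    have hFz₀ : 1 ≤ ‖F z₀‖ := hz₀S.2
    have hz₀0 : z₀ ≠ 0 := by
      intro h
      rw [h, hF0] at hFz₀
      simp only [norm_zero] at hFz₀
      linarith
    have hr₀pos : 0 < ‖z₀‖ := by
      simpa [AbsoluteValue.pos_iff] using hz₀0
    have hlt : ∀ w : ℂ, ‖w‖ < ‖z₀‖ → ‖F w‖ < 1 := by
      intro w hw
      by_contra h
      push_neg at h
      have hz₀le : ‖z₀‖ ≤ ‖z₁‖ := by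
        have := hz₀S.1
        rwa [mem_closedBall_zero_iff] at this
      have hwS : w ∈ S := by
        constructor
        · rw [mem_closedBall_zero_iff]
          linarith
        · exact h
      exact absurd (hz₀min hwS : ‖z₀‖ ≤ ‖w‖) (not_le.2 hw)
    have hle : ∀ w : ℂ, ‖w‖ ≤ ‖z₀‖ → ‖F w‖ ≤ 1 := by
      intro w hw
      have hwD : w ∈ ball (0:ℂ) 1 := by
        rw [mem_ball_zero_iff]
        exact lt_of_le_of_lt hw hr₀1
      have hFw : ContinuousAt F w := (hFdiff.differentiableAt (hOpen.mem_nhds hwD)).continuousAt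
      have htend : Filter.Tendsto (fun t : ℝ => ‖F ((t:ℂ) * w)‖)
          (nhdsWithin 1 (Iio 1)) (nhds (‖F w‖)) := by
        have hc : ContinuousAt (fun t : ℝ => ‖F ((t:ℂ) * w)‖) 1 := by
          have hin : ContinuousAt (fun t : ℝ => (t:ℂ) * w) 1 :=
            (Complex.continuous_ofReal.mul continuous_const).continuousAt
          have hout : ContinuousAt F (((1:ℝ):ℂ) * w) := by simpa using hFw
          exact continuous_norm.continuousAt.comp
            (ContinuousAt.comp (f := fun t : ℝ => (t:ℂ) * w) hout hin)
        have h0 := hc.tendsto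
        simp only [Complex.ofReal_one, one_mul] at h0
        exact h0.mono_left nhdsWithin_le_nhds
      refine le_of_tendsto htend ?_
      filter_upwards [Ioo_mem_nhdsLT_of_mem
        (show (1:ℝ) ∈ Ioc (0:ℝ) 1 from ⟨zero_lt_one, le_refl 1⟩)] with t ht
      apply le_of_lt
      apply hlt
      rw [norm_mul, Complex.norm_real, Real.norm_eq_abs, _root_.abs_of_pos ht.1]
      calc t * ‖w‖ ≤ t * ‖z₀‖ := by nlinarith [ht.1]
        _ < ‖z₀‖ := by nlinarith [ht.2, hr₀pos]
    have hFz₀1 : ‖F z₀‖ = 1 := le_antisymm (hle z₀ le_rfl) hFz₀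
    -- Schwarz lemma setup
    have hBdiff : DifferentiableOn ℂ (fun w => F (z₀ * w)) (ball 0 1) := by
      apply hFdiff.comp (((differentiable_const z₀).mul differentiable_id).differentiableOn)
      intro w hw
      rw [mem_ball_zero_iff] at hw ⊢
      show ‖z₀ * w‖ < 1; rw [norm_mul]
      nlinarith [norm_nonneg w]
    have hBmaps : MapsTo (fun w => F (z₀ * w)) (ball 0 1) (ball 0 1) := by
      intro w hw
      rw [mem_ball_zero_iff] at hw ⊢
      apply hlt
      rw [norm_mul]
      nlinarith [norm_nonneg w]
    have hB0 : F (z₀ * 0) = 0 := by rw [mul_zero, hF0]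
    have hSchwarz : ∀ t : ℝ, t ∈ Ico (0:ℝ) 1 →
        Complex.normSq (F (z₀ * (t:ℂ))) ≤ t^2 := by
      intro t ht
      have habs := norm_le_norm_of_mapsTo_ball hBdiff (hBmaps.mono_right ball_subset_closedBall) hB0
        (z := (t:ℂ)) (by rw [Complex.norm_real, Real.norm_eq_abs, _root_.abs_of_nonneg ht.1]; exact ht.2)
      rw [Complex.norm_real, Real.norm_eq_abs, _root_.abs_of_nonneg ht.1] at habs
      rw [Complex.normSq_eq_norm_sq]
      nlinarith [norm_nonneg (F (z₀ * (t:ℂ)))]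
    set dFv : ℂ := Complex.exp (G z₀) * (deriv (deriv f) z₀ / deriv f z₀ / (lam:ℂ)) with hdFvdef
    have hdF : HasDerivAt F dFv z₀ := hFat z₀ hz₀D
    set u : ℂ := dFv * z₀ with hu
    -- radial derivative
    have hrad : HasDerivAt (fun t : ℝ => F (z₀ * (t:ℂ))) u 1 := by
      have h2 : HasDerivAt (fun w : ℂ => z₀ * w) z₀ 1 := by
        simpa using (hasDerivAt_id (1:ℂ)).const_mul z₀
      have h3 : HasDerivAt F dFv (z₀ * 1) := by rwa [mul_one]
      have h5 := HasDerivAt.comp (1:ℂ) h3 h2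
      rw [show (1:ℂ) = ((1:ℝ):ℂ) by norm_num] at h5
      have h6 := h5.comp_ofReal
      simpa [Function.comp, hu] using h6
    have hφ : HasDerivAt (fun t : ℝ => Complex.normSq (F (z₀ * (t:ℂ))))
        (2 * ((F z₀).re * u.re + (F z₀).im * u.im)) 1 := by
      have := normSq_hasDerivAt hrad
      simpa only [Complex.ofReal_one, mul_one] using this
    have hψ : HasDerivAt (fun t : ℝ => t^2 - Complex.normSq (F (z₀ * (t:ℂ))))
        (2 - 2 * ((F z₀).re * u.re + (F z₀).im * u.im)) 1 := by
      have h2 : HasDerivAt (fun t : ℝ => t^2) 2 1 := by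
        simpa using hasDerivAt_pow 2 (1:ℝ)
      exact h2.sub hφ
    have hnormSq1 : Complex.normSq (F (z₀ * ((1:ℝ):ℂ))) = 1 := by
      rw [Complex.ofReal_one, mul_one, Complex.normSq_eq_norm_sq, hFz₀1]
      norm_num
    have hψ'le : 2 - 2 * ((F z₀).re * u.re + (F z₀).im * u.im) ≤ 0 := by
      have hslope := hasDerivAt_iff_tendsto_slope.1 hψ
      have hsub : Iio (1:ℝ) ⊆ {(1:ℝ)}ᶜ := fun x hx => ne_of_lt hx
      have hslope' := hslope.mono_left (nhdsWithin_mono 1 hsub)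
      refine le_of_tendsto hslope' ?_
      filter_upwards [Ioo_mem_nhdsLT_of_mem
        (show (1:ℝ) ∈ Ioc (0:ℝ) 1 from ⟨zero_lt_one, le_refl 1⟩)] with t ht
      rw [slope_def_field]
      apply div_nonpos_of_nonneg_of_nonpos
      · have h2 := hSchwarz t ⟨ht.1.le, ht.2⟩
        rw [hnormSq1]
        nlinarith
      · linarith [ht.2]
    have hKre : 1 ≤ (F z₀).re * u.re + (F z₀).im * u.im := by linarith
    -- angular derivative
    have hang : HasDerivAt (fun θ : ℝ => F (z₀ * Complex.exp ((θ:ℂ) * Complex.I)))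
        (u * Complex.I) 0 := by
      have hin : HasDerivAt (fun w : ℂ => z₀ * Complex.exp (w * Complex.I))
          (z₀ * Complex.I) 0 := by
        have h1 : HasDerivAt (fun w : ℂ => w * Complex.I) Complex.I 0 :=
          hasDerivAt_mul_const _
        have h2 := h1.cexp
        have h3 := h2.const_mul z₀
        simpa using h3
      have h4 : HasDerivAt F dFv (z₀ * Complex.exp ((0:ℂ) * Complex.I)) := by
        simpa using hdF
      have h5 := HasDerivAt.comp (0:ℂ) h4 hin
      rw [show (0:ℂ) = ((0:ℝ):ℂ) by norm_num] at h5
      have h6 := h5.comp_ofReal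
      have h7 : dFv * (z₀ * Complex.I) = u * Complex.I := by rw [hu]; ring
      rw [h7] at h5 h6
      simpa [Function.comp] using h6
    have hχ : HasDerivAt (fun θ : ℝ => Complex.normSq (F (z₀ * Complex.exp ((θ:ℂ) * Complex.I))))
        (2 * ((F z₀).re * (u * Complex.I).re + (F z₀).im * (u * Complex.I).im)) 0 := by
      have := normSq_hasDerivAt hang
      simpa only [Complex.ofReal_zero, zero_mul, Complex.exp_zero, mul_one] using this
    have hmax : IsLocalMax
        (fun θ : ℝ => Complex.normSq (F (z₀ * Complex.exp ((θ:ℂ) * Complex.I)))) 0 := by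
      apply Filter.Eventually.of_forall
      intro θ
      have habs : ‖z₀ * Complex.exp ((θ:ℂ) * Complex.I)‖ ≤ ‖z₀‖ := by
        rw [norm_mul, Complex.norm_exp_ofReal_mul_I, mul_one]
      have h7 := hle _ habs
      have h8 : Complex.normSq (F (z₀ * Complex.exp (((0:ℝ):ℂ) * Complex.I))) = 1 := by
        simp only [Complex.ofReal_zero, zero_mul, Complex.exp_zero, mul_one]
        rw [Complex.normSq_eq_norm_sq, hFz₀1]; norm_num
      show Complex.normSq (F (z₀ * Complex.exp ((θ:ℂ) * Complex.I)))
        ≤ Complex.normSq (F (z₀ * Complex.exp (((0:ℝ):ℂ) * Complex.I)))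
      rw [h8, Complex.normSq_eq_norm_sq]
      nlinarith [norm_nonneg (F (z₀ * Complex.exp ((θ:ℂ) * Complex.I)))]
    have hzero := hmax.hasDerivAt_eq_zero hχ
    have hKim : (F z₀).re * u.im - (F z₀).im * u.re = 0 := by
      rw [Complex.mul_I_re, Complex.mul_I_im] at hzero
      have : (F z₀).re * -u.im + (F z₀).im * u.re = 0 := by linarith [hzero]
      linarith
    -- assemble the contradiction
    have hw1 : Complex.normSq (F z₀) = 1 := by
      rw [Complex.normSq_eq_norm_sq, hFz₀1]; norm_num
    have hw1' : (F z₀).re * (F z₀).re + (F z₀).im * (F z₀).im = 1 := by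
      have := hw1
      rwa [Complex.normSq_apply] at this
    have hEne : (1 + F z₀) ≠ 0 := by
      rw [hexpG z₀]
      exact Complex.exp_ne_zero _
    have hwre : (1:ℝ) + (F z₀).re ≠ 0 := by
      intro h
      have hre : (F z₀).re = -1 := by linarith
      have him2 : (F z₀).im = 0 := by nlinarith
      apply hEne
      apply Complex.ext
      · simp [hre]
      · simp [him2]
    set k : ℝ := (F z₀).re * u.re + (F z₀).im * u.im with hk
    have huKw : u = (k:ℂ) * F z₀ := by
      have h9 : (starRingEnd ℂ) (F z₀) * u = (k:ℂ) := by
        apply Complex.ext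
        · simp only [Complex.mul_re, Complex.conj_re, Complex.conj_im, Complex.ofReal_re, hk]
          ring
        · simp only [Complex.mul_im, Complex.conj_re, Complex.conj_im, Complex.ofReal_im]
          linarith [hKim]
      have h10 : F z₀ * ((starRingEnd ℂ) (F z₀) * u) = F z₀ * (k:ℂ) := by rw [h9]
      rw [← mul_assoc, Complex.mul_conj, hw1, Complex.ofReal_one, one_mul] at h10
      rw [h10, mul_comm]
    have hv : ((F z₀ / (1 + F z₀))).re = 1/2 := by
      have hN : Complex.normSq (1 + F z₀) = 2 * (1 + (F z₀).re) := by
        simp only [Complex.normSq_apply, Complex.add_re, Complex.add_im,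
          Complex.one_re, Complex.one_im]
        nlinarith
      rw [Complex.div_re, hN]
      have h12 : (1 + F z₀).re = 1 + (F z₀).re := by simp
      have h13 : (1 + F z₀).im = (F z₀).im := by simp
      rw [h12, h13]
      rw [← add_div, div_eq_div_iff (by intro hc; apply hwre; linarith) (by norm_num : (2:ℝ) ≠ 0)]
      linear_combination 2 * hw1'
    have hre12 : (u / (1 + F z₀)).re = k * (1/2) := by
      rw [huKw, mul_div_assoc, Complex.re_ofReal_mul, hv]
    have hcontra := hzG z₀ hz₀D
    have hrel : z₀ * (deriv (deriv f) z₀ / deriv f z₀ / (lam:ℂ)) = u / (1 + F z₀) := by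
      rw [hu, hdFvdef, hexpG z₀, eq_div_iff (Complex.exp_ne_zero (G z₀))]
      ring
    rw [hrel, hre12] at hcontra
    linarith
  -- cosine positivity
  have hcos : ∀ z ∈ ball (0:ℂ) 1, 0 < Real.cos ((G z).im) := by
    intro z hz
    have h1 := hF1 z hz
    have h2 : ‖Complex.exp (G z) - 1‖ < 1 := by
      have := hexpG z
      calc ‖Complex.exp (G z) - 1‖
          = ‖F z‖ := by rw [← this]; ring_nf
        _ < 1 := h1
    have h3 : |(Complex.exp (G z)).re - 1| < 1 := by
      have h4 := Complex.abs_re_le_norm (Complex.exp (G z) - 1)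
      simp only [Complex.sub_re, Complex.one_re] at h4
      exact lt_of_le_of_lt h4 h2
    have h4 : 0 < (Complex.exp (G z)).re := by
      have := abs_lt.1 h3
      linarith [this.1]
    rw [Complex.exp_re] at h4
    nlinarith [Real.exp_pos (G z).re]
  -- imaginary part bound
  have hIm : ∀ z ∈ ball (0:ℂ) 1, |(G z).im| < Real.pi / 2 := by
    intro z hz
    by_contra hcon
    push_neg at hcon
    have hmem : ∀ t ∈ Icc (0:ℝ) 1, ((t:ℂ) * z) ∈ ball (0:ℂ) 1 := by
      intro t ht
      rw [mem_ball_zero_iff] at hz ⊢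
      calc ‖(t:ℂ) * z‖ = |t| * ‖z‖ := by
            rw [norm_mul, Complex.norm_real, Real.norm_eq_abs]
        _ ≤ 1 * ‖z‖ := by
            apply mul_le_mul_of_nonneg_right _ (norm_nonneg z)
            rw [abs_le]; exact ⟨le_trans (by norm_num) ht.1, ht.2⟩
        _ < 1 := by rwa [one_mul]
    set v : ℝ → ℝ := fun t => (G ((t:ℂ) * z)).im with hvdef
    have hvc : ContinuousOn v (Icc 0 1) := by
      apply Complex.continuous_im.comp_continuousOn
      exact hGdiffOn.continuousOn.comp
        ((Complex.continuous_ofReal.mul continuous_const).continuousOn) hmem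
    have hv0 : v 0 = 0 := by simp [hvdef, hG0]
    have hv1 : v 1 = (G z).im := by simp [hvdef]
    rcases le_abs.1 hcon with hh | hh
    · -- π/2 ≤ im
      have hsub := intermediate_value_Icc (by norm_num : (0:ℝ) ≤ 1) hvc
      have hmemIcc : Real.pi / 2 ∈ Icc (v 0) (v 1) := by
        rw [hv0, hv1]
        exact ⟨by positivity, hh⟩
      obtain ⟨t, ht, hvt⟩ := hsub hmemIcc
      have hcost := hcos _ (hmem t ht)
      have : Real.cos (v t) > 0 := hcost
      rw [hvt] at this
      simp [Real.cos_pi_div_two] at this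
    · -- im ≤ -π/2
      have hsub := intermediate_value_Icc' (by norm_num : (0:ℝ) ≤ 1) hvc
      have hmemIcc : -(Real.pi / 2) ∈ Icc (v 1) (v 0) := by
        rw [hv0, hv1]
        constructor
        · linarith
        · linarith [Real.pi_pos]
      obtain ⟨t, ht, hvt⟩ := hsub hmemIcc
      have hcost := hcos _ (hmem t ht)
      have : Real.cos (v t) > 0 := hcost
      rw [hvt] at this
      simp [Real.cos_pi_div_two] at this
  -- assemble
  refine ⟨1, le_refl 1, F, hFdiff, ?_, hF0, ?_⟩
  · intro z hz
    rw [mem_ball_zero_iff]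
    exact hF1 z hz
  · intro z hz
    show deriv f z = Complex.exp (((lam / ((1:ℕ):ℝ) : ℝ) : ℂ) * Complex.log (1 + F z ^ (1:ℕ)))
    have h1 : 1 + F z ^ (1:ℕ) = Complex.exp (G z) := by
      rw [pow_one]; exact hexpG z
    have him := hIm z hz
    have hlog : Complex.log (1 + F z ^ (1:ℕ)) = G z := by
      rw [h1, Complex.log_exp]
      · have := (abs_lt.1 him).1
        linarith [Real.pi_pos]
      · have := (abs_lt.1 him).2
        linarith [Real.pi_pos]
    rw [hlog]
    have hc : ((lam / ((1:ℕ):ℝ) : ℝ) : ℂ) = (lam : ℂ) := by norm_num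
    rw [hc]
    have hmul : (lam:ℂ) * G z = g z := by
      show (lam:ℂ) * (g z / (lam:ℂ)) = g z
      rw [mul_div_assoc', mul_div_cancel_left₀ _ hlamne]
    rw [hmul, hpg z hz]
end

section
/- Let 0 < λ ≤ 1 and let f ∈ 𝒩(λ), and suppose the analytic function z ↦ f(z)/z (extended by value 1 at z = 0) is not identically 1. Then there exists an integer n ≥ 1 such that f(z)/z ≺ (1 + z^n)^{λ/n} on 𝔻. -/
open Complex Metric
open Set Filter Topology
open scoped NNReal ENNReal

lemma exists_primitive (h : ℂ → ℂ) (hh : DifferentiableOn ℂ h (ball 0 1)) :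
    ∃ L : ℂ → ℂ, L 0 = 0 ∧ ∀ z ∈ ball (0:ℂ) 1, HasDerivAt L (h z) z := by
  have hsub : ∀ s : ℝ≥0, (s:ℝ) < 1 → closedBall (0:ℂ) s ⊆ ball 0 1 := by
    intro s hs
    exact (closedBall_subset_ball (by exact_mod_cast hs))
  set p := cauchyPowerSeries h 0 ((1:ℝ)/2).toNNReal with hpdef
  have hp2 : HasFPowerSeriesOnBall h p 0 ((1:ℝ)/2).toNNReal :=
    (hh.mono (hsub _ (by norm_num))).hasFPowerSeriesOnBall (by norm_num)
  have hps : ∀ s : ℝ≥0, 0 < s → (s:ℝ) < 1 → HasFPowerSeriesOnBall h p 0 s := by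
    intro s hs0 hs1
    have h2 : HasFPowerSeriesOnBall h (cauchyPowerSeries h 0 s) 0 s :=
      (hh.mono (hsub s hs1)).hasFPowerSeriesOnBall hs0
    have heq : cauchyPowerSeries h 0 s = p :=
      h2.hasFPowerSeriesAt.eq_formalMultilinearSeries hp2.hasFPowerSeriesAt
    rwa [heq] at h2
  set c : ℕ → ℂ := fun n => p.coeff n with hcdef
  -- coefficient bound
  have hbound : ∀ r : ℝ, 0 ≤ r → r < 1 → Summable (fun n => ‖c n‖ * r ^ n) := by
    intro r hr0 hr1
    obtain ⟨s, hrs, hs1⟩ : ∃ s, r < s ∧ s < 1 := ⟨(r+1)/2, by linarith, by linarith⟩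
    have hs0 : 0 < s := lt_of_le_of_lt hr0 hrs
    have hrad : (s.toNNReal : ℝ≥0∞) < p.radius := by
      have hle := (hps ((s+1)/2).toNNReal (by simp; linarith)
        (by rw [Real.coe_toNNReal _ (by linarith)]; linarith)).r_le
      refine lt_of_lt_of_le ?_ hle
      rw [ENNReal.coe_lt_coe]
      have : (s.toNNReal : ℝ) < (((s+1)/2).toNNReal : ℝ) := by
        rw [Real.coe_toNNReal _ hs0.le, Real.coe_toNNReal _ (by linarith)]; linarith
      exact_mod_cast this
    obtain ⟨C, hC0, hC⟩ := p.norm_mul_pow_le_of_lt_radius hrad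
    have hCb : ∀ n, ‖c n‖ * r ^ n ≤ C * (r / s) ^ n := by
      intro n
      have h1 := hC n
      rw [p.norm_apply_eq_norm_coef] at h1
      rw [Real.coe_toNNReal _ hs0.le] at h1
      have hs' : s ≠ 0 := ne_of_gt hs0
      have expand : ‖c n‖ * r ^ n = (‖c n‖ * s ^ n) * (r / s) ^ n := by
        rw [div_pow, mul_assoc, mul_comm (s ^ n) ((r ^ n) / (s ^ n)), div_mul_cancel₀]
        positivity
      rw [expand]
      apply mul_le_mul_of_nonneg_right h1
      positivity
    apply Summable.of_nonneg_of_le (fun n => by positivity) hCb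
    apply Summable.mul_left
    apply summable_geometric_of_lt_one (by positivity)
    rw [div_lt_one hs0]; exact hrs
  have hsum : ∀ x ∈ ball (0:ℂ) 1, HasSum (fun n => c n * x ^ n) (h x) := by
    intro x hx
    rw [mem_ball, dist_zero_right] at hx
    obtain ⟨s, hxs, hs1⟩ : ∃ s, ‖x‖ < s ∧ s < 1 :=
      ⟨(‖x‖+1)/2, by linarith, by linarith⟩
    have hs0 : 0 < s := lt_of_le_of_lt (norm_nonneg x) hxs
    have hpb := hps s.toNNReal (by simp [hs0]) (by rw [Real.coe_toNNReal _ hs0.le]; exact hs1)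
    have hx' : x ∈ Metric.eball (0:ℂ) (s.toNNReal : ℝ≥0∞) := by
      rw [Metric.emetric_ball_nnreal, mem_ball, dist_zero_right, Real.coe_toNNReal _ hs0.le]
      exact hxs
    have := hpb.hasSum hx'
    simp only [zero_add] at this
    rw [show (fun n => c n * x ^ n) = fun n => p n (fun _ => x) from funext fun n => by
      rw [p.apply_eq_pow_smul_coeff, smul_eq_mul, mul_comm]]
    exact this
  refine ⟨fun z => ∑' n, c n / (n + 1) * z ^ (n + 1), ?_, ?_⟩
  · simp
  · intro x hx
    simp only [mem_ball, dist_zero_right] at hx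
    obtain ⟨r, hxr, hr1⟩ : ∃ r, ‖x‖ < r ∧ r < 1 := ⟨(‖x‖+1)/2, by linarith, by linarith⟩
    have hr0 : 0 < r := lt_of_le_of_lt (norm_nonneg x) hxr
    have key := hasDerivAt_tsum_of_isPreconnected
      (u := fun n => ‖c n‖ * r ^ n) (𝕜 := ℂ) (F := ℂ)
      (g := fun n y => c n / (n + 1) * y ^ (n + 1))
      (g' := fun n y => c n * y ^ n)
      (t := ball (0:ℂ) r) (y₀ := 0) (y := x)
      (hbound r hr0.le hr1) isOpen_ball ((convex_ball _ _).isPreconnected)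
      ?_ ?_ (by simp [hr0]) ?_ (mem_ball_zero_iff.2 hxr)
    · have heq := (hsum x (mem_ball_zero_iff.2 hx)).tsum_eq
      rw [heq] at key
      exact key
    · intro n y hy
      have hne : ((n:ℂ) + 1) ≠ 0 := Nat.cast_add_one_ne_zero n
      have hd := (hasDerivAt_pow (n + 1) y).const_mul (c n / ((n:ℂ) + 1))
      have hval : c n / ((n:ℂ) + 1) * (↑(n + 1) * y ^ (n + 1 - 1)) = c n * y ^ n := by
        rw [Nat.add_sub_cancel]
        push_cast
        field_simp
        try ring
      rw [hval] at hd
      exact hd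
    · intro n y hy
      simp only [mem_ball, dist_zero_right] at hy
      rw [norm_mul, norm_pow]
      exact mul_le_mul_of_nonneg_left (pow_le_pow_left₀ (norm_nonneg y) hy.le n) (norm_nonneg _)
    · apply Summable.congr summable_zero
      intro n; simp


lemma exists_log_s4 (g : ℂ → ℂ) (hg : DifferentiableOn ℂ g (ball 0 1)) (hg0 : g 0 = 1)
    (hne : ∀ z ∈ ball (0:ℂ) 1, g z ≠ 0) :
    ∃ L : ℂ → ℂ, L 0 = 0 ∧ (∀ z ∈ ball (0:ℂ) 1, HasDerivAt L (deriv g z / g z) z) ∧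
      ∀ z ∈ ball (0:ℂ) 1, Complex.exp (L z) = g z := by
  have hball : (0:ℂ) ∈ ball (0:ℂ) 1 := by simp
  have hdq : DifferentiableOn ℂ (fun z => deriv g z / g z) (ball 0 1) := by
    apply DifferentiableOn.div _ hg hne
    exact ((hg.analyticOnNhd isOpen_ball).deriv).differentiableOn
  obtain ⟨L, hL0, hL⟩ := exists_primitive _ hdq
  refine ⟨L, hL0, hL, ?_⟩
  have hder : ∀ z ∈ ball (0:ℂ) 1, HasDerivAt (fun w => g w * Complex.exp (-(L w))) 0 z := by
    intro z hz
    have hgz : HasDerivAt g (deriv g z) z :=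
      (hg.differentiableAt (isOpen_ball.mem_nhds hz)).hasDerivAt
    have hLz := hL z hz
    have hE := hgz.mul ((hLz.neg).cexp)
    have hgnz := hne z hz
    have hcanc : g z * (deriv g z / g z) = deriv g z := mul_div_cancel₀ _ hgnz
    rw [show (0:ℂ) = deriv g z * Complex.exp (-L z) + g z * (Complex.exp (-L z) * -(deriv g z / g z)) by
      linear_combination (Complex.exp (-(L z))) * hcanc]
    exact hE
  have hconst : ∀ z ∈ ball (0:ℂ) 1, g z * Complex.exp (-(L z)) = 1 := by
    intro z hz
    have hdiff : DifferentiableOn ℂ (fun w => g w * Complex.exp (-(L w))) (ball 0 1) :=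
      fun w hw => ((hder w hw).differentiableAt).differentiableWithinAt
    have hfd : ∀ w ∈ ball (0:ℂ) 1,
        fderivWithin ℂ (fun w => g w * Complex.exp (-(L w))) (ball 0 1) w = 0 := by
      intro w hw
      rw [fderivWithin_of_isOpen isOpen_ball hw]
      have := (hder w hw).hasFDerivAt.fderiv
      rw [this]
      ext v
      simp
    have := (convex_ball (0:ℂ) 1).is_const_of_fderivWithin_eq_zero hdiff hfd hz hball
    rw [this, hg0, hL0]
    simp
  intro z hz
  have h1 := hconst z hz
  rw [Complex.exp_neg] at h1
  field_simp at h1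
  exact h1.symm


-- Re(conj x * y) as dot product of coordinates
private lemma re_conj_mul (x y : ℂ) : ((starRingEnd ℂ) x * y).re = x.re * y.re + x.im * y.im := by
  simp [Complex.mul_re]

lemma jack_lemma (H : ℂ → ℂ) (hd : DifferentiableOn ℂ H (ball 0 1)) (h0 : H 0 = 1)
    (hne : ∀ z ∈ ball (0:ℂ) 1, H z ≠ 0)
    (hre : ∀ z ∈ ball (0:ℂ) 1, (z * deriv H z / H z).re < 1/2) :
    ∀ z ∈ ball (0:ℂ) 1, ‖H z - 1‖ < 1 := by
  by_contra hcon
  push_neg at hcon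
  obtain ⟨z1, hz1b, hz1⟩ := hcon
  rw [mem_ball, dist_zero_right] at hz1b
  set b : ℂ → ℂ := fun z => H z - 1 with hbdef
  have hdb : DifferentiableOn ℂ b (ball 0 1) := hd.sub_const 1
  have hbc : ContinuousOn b (ball 0 1) := hdb.continuousOn
  have hb0 : b 0 = 0 := by simp [hbdef, h0]
  -- IVT helper
  have ivt : ∀ w : ℂ, ‖w‖ < 1 → 1 ≤ ‖b w‖ → ∃ w' : ℂ, ‖w'‖ ≤ ‖w‖ ∧ ‖b w'‖ = 1 := by
    intro w hw h1
    have hmaps : ∀ t : ℝ, t ∈ Icc (0:ℝ) 1 → ((t:ℂ) * w) ∈ ball (0:ℂ) 1 := by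
      intro t ht
      rw [mem_ball, dist_zero_right, norm_mul, Complex.norm_real, Real.norm_eq_abs]
      calc |t| * ‖w‖ ≤ 1 * ‖w‖ := by
            apply mul_le_mul_of_nonneg_right _ (norm_nonneg w)
            rw [abs_le]; exact ⟨by linarith [ht.1], ht.2⟩
        _ = ‖w‖ := one_mul _
        _ < 1 := hw
    have hcont : ContinuousOn (fun t : ℝ => ‖b ((t:ℂ) * w)‖) (Icc 0 1) := by
      apply ContinuousOn.norm
      apply hbc.comp
      · exact (Complex.continuous_ofReal.mul continuous_const).continuousOn
      · intro t ht; exact hmaps t ht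
    have hivt := intermediate_value_Icc (zero_le_one) hcont
    have h1mem : (1:ℝ) ∈ Icc ‖b (((0:ℝ):ℂ) * w)‖ ‖b (((1:ℝ):ℂ) * w)‖ := by
      constructor
      · simp [hb0]
      · simpa [hb0] using h1
    obtain ⟨t, ht, htv⟩ := hivt h1mem
    refine ⟨(t:ℂ) * w, ?_, htv⟩
    rw [norm_mul, Complex.norm_real, Real.norm_eq_abs]
    calc |t| * ‖w‖ ≤ 1 * ‖w‖ := by
          apply mul_le_mul_of_nonneg_right _ (norm_nonneg w)
          rw [abs_le]; exact ⟨by linarith [ht.1], ht.2⟩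
      _ = ‖w‖ := one_mul _
  -- the compact set S and its minimum
  set S : Set ℂ := closedBall (0:ℂ) ‖z1‖ ∩ (fun z => ‖b z‖) ⁻¹' {1} with hSdef
  have hsubb : closedBall (0:ℂ) ‖z1‖ ⊆ ball 0 1 := closedBall_subset_ball hz1b
  have hSclosed : IsClosed S :=
    ContinuousOn.preimage_isClosed_of_isClosed ((hbc.mono hsubb).norm)
      isClosed_closedBall isClosed_singleton
  have hScompact : IsCompact S :=
    (isCompact_closedBall (0:ℂ) ‖z1‖).of_isClosed_subset hSclosed inter_subset_left
  have hSne : S.Nonempty := by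
    obtain ⟨w', hw1, hw2⟩ := ivt z1 hz1b hz1
    exact ⟨w', ⟨by rwa [mem_closedBall, dist_zero_right], hw2⟩⟩
  obtain ⟨z0, hz0S, hz0min'⟩ := hScompact.exists_isMinOn hSne continuous_norm.continuousOn
  have hz0min : ∀ w ∈ S, ‖z0‖ ≤ ‖w‖ := fun w hw => hz0min' hw
  have hz0cb : ‖z0‖ ≤ ‖z1‖ := by
    have := hz0S.1; rwa [mem_closedBall, dist_zero_right] at this
  have hbz0 : ‖b z0‖ = 1 := hz0S.2
  set r0 : ℝ := ‖z0‖ with hr0def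
  have hr0lt1 : r0 < 1 := lt_of_le_of_lt hz0cb hz1b
  have hr0pos : 0 < r0 := by
    rcases eq_or_lt_of_le (norm_nonneg z0) with h | h
    · exfalso
      have : z0 = 0 := by rwa [eq_comm, norm_eq_zero] at h
      rw [this, hb0] at hbz0; simp at hbz0
    · exact h
  have hz0ball : z0 ∈ ball (0:ℂ) 1 := by rw [mem_ball, dist_zero_right]; exact hr0lt1
  -- strict bound inside radius r0
  have hsmall : ∀ z : ℂ, ‖z‖ < r0 → ‖b z‖ < 1 := by
    intro z hz
    by_contra hge
    push_neg at hge
    obtain ⟨w', hw1, hw2⟩ := ivt z (lt_trans hz hr0lt1) hge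
    have hw'S : w' ∈ S := by
      constructor
      · rw [mem_closedBall, dist_zero_right]
        exact le_trans hw1 (le_trans hz.le hz0cb)
      · exact hw2
    have := hz0min w' hw'S
    have : r0 ≤ ‖w'‖ := this
    linarith [lt_of_le_of_lt hw1 hz]
  -- weak bound on closed ball r0
  have hle1 : ∀ z : ℂ, ‖z‖ ≤ r0 → ‖b z‖ ≤ 1 := by
    intro z hz
    rcases lt_or_eq_of_le hz with h | h
    · exact (hsmall z h).le
    · have hzball : z ∈ ball (0:ℂ) 1 := by
        rw [mem_ball, dist_zero_right, h]; exact hr0lt1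
      have hcontat : ContinuousAt (fun t : ℝ => ‖b ((t:ℂ) * z)‖) 1 := by
        have hinner : ContinuousAt (fun t : ℝ => (t:ℂ) * z) 1 :=
          (Complex.continuous_ofReal.mul continuous_const).continuousAt
        have houter : ContinuousAt b (((1:ℝ):ℂ) * z) := by
          rw [show (((1:ℝ):ℂ) * z) = z by simp]
          exact hbc.continuousAt (isOpen_ball.mem_nhds hzball)
        exact ContinuousAt.norm
          (ContinuousAt.comp (f := fun t : ℝ => (t:ℂ) * z) (x := (1:ℝ)) houter hinner)
      have htend : Tendsto (fun t : ℝ => ‖b ((t:ℂ) * z)‖) (nhdsWithin 1 (Iio 1)) (nhds ‖b z‖) := by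
        have := hcontat.tendsto
        rw [show ‖b (((1:ℝ):ℂ) * z)‖ = ‖b z‖ by norm_num] at this
        exact this.mono_left nhdsWithin_le_nhds
      apply le_of_tendsto htend
      filter_upwards [Ioo_mem_nhdsLT_of_mem (show (1:ℝ) ∈ Ioc (0:ℝ) 1 by constructor <;> norm_num)]
        with t ht
      apply le_of_lt
      apply hsmall
      rw [norm_mul, Complex.norm_real, Real.norm_eq_abs, abs_of_pos ht.1, ← h]
      calc t * ‖z‖ < 1 * ‖z‖ := by
            apply mul_lt_mul_of_pos_right ht.2
            rw [h]; exact hr0pos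
        _ = ‖z‖ := one_mul _
  -- Schwarz lemma
  have hschwarz : ∀ w : ℂ, w ∈ ball (0:ℂ) r0 → ‖b w‖ ≤ 1 / r0 * ‖w‖ := by
    intro w hw
    have hmaps : MapsTo b (ball (0:ℂ) r0) (ball (b 0) 1) := by
      intro z hz
      rw [mem_ball, hb0, dist_zero_right]
      rw [mem_ball, dist_zero_right] at hz
      exact hsmall z hz
    have := Complex.dist_le_div_mul_dist_of_mapsTo_ball
      (hdb.mono (ball_subset_ball hr0lt1.le)) (hmaps.mono_right ball_subset_closedBall) hw
    rwa [hb0, dist_zero_right, dist_zero_right] at this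
  -- derivative of H at z0
  have hHz0 : HasDerivAt H (deriv H z0) z0 :=
    (hd.differentiableAt (isOpen_ball.mem_nhds hz0ball)).hasDerivAt
  set B : ℂ := deriv H z0 with hBdef
  have hB : HasDerivAt b B z0 := hHz0.sub_const 1
  set b0 : ℂ := b z0 with hb0def
  have hb0norm : b0.re * b0.re + b0.im * b0.im = 1 := by
    have : Complex.normSq b0 = 1 := by
      rw [Complex.normSq_eq_norm_sq]
      rw [hbz0]
      norm_num
    rw [← this, Complex.normSq_apply]
  -- radial derivative function
  set c : ℂ := B * z0 with hcdef
  have hwrad : HasDerivAt (fun t : ℝ => b ((t:ℂ) * z0)) c 1 := by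
    have inner : HasDerivAt (fun u : ℂ => u * z0) z0 1 := hasDerivAt_mul_const z0
    have hBat : HasDerivAt b B (((1:ℂ)) * z0) := by rw [one_mul]; exact hB
    have comp := HasDerivAt.comp (1:ℂ) hBat inner
    have : HasDerivAt (fun u : ℂ => b (u * z0)) (B * z0) 1 := comp
    have := this.comp_ofReal (z := 1)
    simpa using this
  -- the real function u
  set wf : ℝ → ℂ := fun t => b ((t:ℂ) * z0) with hwfdef
  have hwf1 : wf 1 = b0 := by simp [hwfdef, hb0def]
  have hwre : HasDerivAt (fun t => (wf t).re) c.re 1 :=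
    (Complex.reCLM.hasFDerivAt.comp_hasDerivAt 1 hwrad)
  have hwim : HasDerivAt (fun t => (wf t).im) c.im 1 :=
    (Complex.imCLM.hasFDerivAt.comp_hasDerivAt 1 hwrad)
  set u : ℝ → ℝ := fun t => (wf t).re * (wf t).re + (wf t).im * (wf t).im with hudef
  have hu : HasDerivAt u (c.re * b0.re + b0.re * c.re + (c.im * b0.im + b0.im * c.im)) 1 := by
    have h1 := (hwre.mul hwre).add (hwim.mul hwim)
    rw [hwf1] at h1
    exact h1
  have hu1 : u 1 = 1 := by rw [hudef]; simp only [hwf1]; exact hb0norm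
  -- u t ≤ t^2 for t ∈ (0,1)
  have hut : ∀ t : ℝ, 0 < t → t < 1 → u t ≤ t ^ 2 := by
    intro t ht0 ht1
    have hmem : ((t:ℂ) * z0) ∈ ball (0:ℂ) r0 := by
      rw [mem_ball, dist_zero_right, norm_mul, Complex.norm_real, Real.norm_eq_abs, abs_of_pos ht0]
      calc t * ‖z0‖ < 1 * ‖z0‖ := mul_lt_mul_of_pos_right ht1 hr0pos
        _ = r0 := one_mul _
    have hs := hschwarz _ hmem
    rw [norm_mul, Complex.norm_real, Real.norm_eq_abs, abs_of_pos ht0] at hs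
    have hs2 : ‖wf t‖ ≤ t := by
      rw [hwfdef]
      calc ‖b ((t:ℂ) * z0)‖ ≤ 1 / r0 * (t * ‖z0‖) := hs
        _ = t := by
              have hz0ne : ‖z0‖ ≠ 0 := ne_of_gt hr0pos
              field_simp
              try exact Or.inl rfl
              exact hr0def.symm
    have : u t = ‖wf t‖ ^ 2 := by
      rw [hudef]
      simp only []
      rw [← Complex.normSq_eq_norm_sq,
        Complex.normSq_apply]
    rw [this]
    exact pow_le_pow_left₀ (norm_nonneg _) hs2 2
  -- derivative bound: 2 ≤ u'(1)
  set D : ℝ := c.re * b0.re + b0.re * c.re + (c.im * b0.im + b0.im * c.im) with hDdef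
  have hD2 : 2 ≤ D := by
    have hslope : Tendsto (slope u 1) (nhdsWithin 1 (Iio 1)) (nhds D) := by
      rw [hasDerivAt_iff_tendsto_slope] at hu
      exact hu.mono_left (nhdsWithin_mono _ (fun x hx => ne_of_lt hx))
    have htplus : Tendsto (fun t : ℝ => t + 1) (nhdsWithin 1 (Iio 1)) (nhds 2) := by
      have hcont2 : Continuous (fun t : ℝ => t + 1) := by continuity
      have h2 := hcont2.tendsto (1:ℝ)
      norm_num at h2
      exact h2.mono_left nhdsWithin_le_nhds
    apply le_of_tendsto_of_tendsto htplus hslope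
    filter_upwards [Ioo_mem_nhdsLT_of_mem (show (1:ℝ) ∈ Ioc (0:ℝ) 1 by constructor <;> norm_num)]
      with t ht
    have hut' := hut t ht.1 ht.2
    have htne : t - 1 < 0 := by linarith [ht.2]
    rw [slope_def_field, hu1, le_div_iff_of_neg htne]
    nlinarith
  -- tangential direction
  set c2 : ℂ := B * (I * z0) with hc2def
  have hetang : HasDerivAt (fun s : ℝ => b (Complex.exp ((s:ℂ) * I) * z0)) c2 0 := by
    have h1 : HasDerivAt (fun u : ℂ => u * I) I 0 := hasDerivAt_mul_const I
    have h2 : HasDerivAt (fun u : ℂ => Complex.exp (u * I))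
        (Complex.exp ((0:ℂ) * I) * I) 0 := h1.cexp
    have h3 : HasDerivAt (fun u : ℂ => Complex.exp (u * I) * z0)
        (Complex.exp ((0:ℂ) * I) * I * z0) 0 := h2.mul_const z0
    rw [show Complex.exp ((0:ℂ) * I) * I * z0 = I * z0 by simp] at h3
    have hBat : HasDerivAt b B (Complex.exp ((0:ℂ) * I) * z0) := by
      rw [show Complex.exp ((0:ℂ) * I) * z0 = z0 by simp]
      exact hB
    have comp := HasDerivAt.comp (0:ℂ) hBat h3
    have := comp.comp_ofReal (z := 0)
    simpa [hc2def, Function.comp] using this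
  set ef : ℝ → ℂ := fun s => b (Complex.exp ((s:ℂ) * I) * z0) with hefdef
  have hef0 : ef 0 = b0 := by simp [hefdef, hb0def]
  have here' : HasDerivAt (fun s => (ef s).re) c2.re 0 :=
    Complex.reCLM.hasFDerivAt.comp_hasDerivAt 0 hetang
  have heim : HasDerivAt (fun s => (ef s).im) c2.im 0 :=
    Complex.imCLM.hasFDerivAt.comp_hasDerivAt 0 hetang
  set v : ℝ → ℝ := fun s => (ef s).re * (ef s).re + (ef s).im * (ef s).im with hvdef
  have hv : HasDerivAt v (c2.re * b0.re + b0.re * c2.re + (c2.im * b0.im + b0.im * c2.im)) 0 := by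
    have h1 := (here'.mul here').add (heim.mul heim)
    rw [hef0] at h1
    exact h1
  have hv0 : v 0 = 1 := by rw [hvdef]; simp only [hef0]; exact hb0norm
  have hvmax : IsLocalMax v 0 := by
    apply Filter.Eventually.of_forall
    intro s
    have hnorm : ‖Complex.exp ((s:ℂ) * I) * z0‖ ≤ r0 := by
      rw [norm_mul, show ‖Complex.exp ((s:ℂ) * I)‖ = 1 from Complex.norm_exp_ofReal_mul_I s,
        one_mul]
    have hles := hle1 _ hnorm
    have hvs : v s = ‖ef s‖ ^ 2 := by
      rw [hvdef]
      simp only []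
      rw [← Complex.normSq_eq_norm_sq,
        Complex.normSq_apply]
    have : v s ≤ 1 := by
      rw [hvs]
      calc ‖ef s‖ ^ 2 ≤ 1 ^ 2 := pow_le_pow_left₀ (norm_nonneg _) hles 2
        _ = 1 := one_pow 2
    rw [hv0]
    exact this
  have hDv : c2.re * b0.re + b0.re * c2.re + (c2.im * b0.im + b0.im * c2.im) = 0 :=
    hvmax.hasDerivAt_eq_zero hv
  -- algebra: c = x * b0 with x real ≥ 1
  have hc2re : c2.re = -c.im := by
    rw [hc2def, hcdef, show B * (I * z0) = I * (B * z0) by ring]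
    simp [Complex.mul_re]
  have hc2im : c2.im = c.re := by
    rw [hc2def, hcdef, show B * (I * z0) = I * (B * z0) by ring]
    simp [Complex.mul_im]
  have hIm : b0.re * c.im - b0.im * c.re = 0 := by
    rw [hc2re, hc2im] at hDv
    linarith
  set x : ℝ := b0.re * c.re + b0.im * c.im with hxdef
  have hx1 : 1 ≤ x := by rw [hxdef]; linarith [hD2]
  have hcre : c.re = x * b0.re := by
    rw [hxdef]
    linear_combination (-c.re) * hb0norm - b0.im * hIm
  have hcim : c.im = x * b0.im := by
    rw [hxdef]
    linear_combination (-c.im) * hb0norm + b0.re * hIm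
  have hc_eq : c = (x:ℂ) * b0 := by
    apply Complex.ext
    · rw [Complex.re_ofReal_mul, hcre]
    · rw [Complex.im_ofReal_mul, hcim]
  -- final contradiction
  have hz0H := hre z0 hz0ball
  have hHz0val : H z0 = 1 + b0 := by rw [hb0def, hbdef]; ring
  have hHne0 : (1:ℂ) + b0 ≠ 0 := by rw [← hHz0val]; exact hne z0 hz0ball
  have hderiv_eq : z0 * deriv H z0 = c := by rw [hcdef, hBdef]; ring
  rw [hderiv_eq, hc_eq, hHz0val] at hz0H
  have hnormsq : Complex.normSq (1 + b0) = 2 * (1 + b0.re) := by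
    rw [Complex.normSq_apply]
    simp only [Complex.add_re, Complex.add_im, Complex.one_re, Complex.one_im, zero_add]
    linear_combination hb0norm
  have hrepos : 0 < 1 + b0.re := by
    have h1 : 0 < Complex.normSq (1 + b0) := Complex.normSq_pos.2 hHne0
    rw [hnormsq] at h1
    linarith
  have hcompute : ((x:ℂ) * b0 / (1 + b0)).re = x / 2 := by
    rw [Complex.div_re, hnormsq]
    have hre' : ((x:ℂ) * b0).re = x * b0.re := Complex.re_ofReal_mul x b0
    have him' : ((x:ℂ) * b0).im = x * b0.im := Complex.im_ofReal_mul x b0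
    rw [hre', him']
    simp only [Complex.add_re, Complex.add_im, Complex.one_re, Complex.one_im, zero_add]
    rw [← add_div]
    rw [show x * b0.re * (1 + b0.re) + x * b0.im * b0.im = x * (1 + b0.re) by
      linear_combination x * hb0norm]
    have hne' : (1 + b0.re) ≠ 0 := ne_of_gt hrepos
    field_simp
  rw [hcompute] at hz0H
  linarith


/-- Let `0 < λ ≤ 1` and `f ∈ 𝒩(λ)`. Let `g` be the analytic function
equal to `f z / z` for `z ≠ 0` and to `1` at `z = 0`, and suppose `g` is not
identically `1` on `𝔻`. Then there is an integer `n ≥ 1` with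
`f(z)/z ≺ (1 + z^n)^{λ/n}` on `𝔻`. -/
theorem stmt4 (lam : ℝ) (hlam0 : 0 < lam) (hlam1 : lam ≤ 1)
    (f : ℂ → ℂ)
    (hf : DifferentiableOn ℂ f (ball 0 1))
    (hf0 : f 0 = 0) (hfd0 : deriv f 0 = 1)
    (hfne : ∀ z ∈ ball (0:ℂ) 1, z ≠ 0 → f z ≠ 0)
    (hN : ∀ z ∈ ball (0:ℂ) 1, (z * deriv f z / f z).re < 1 + lam / 2)
    (g : ℂ → ℂ)
    (hg0 : g 0 = 1)
    (hgval : ∀ z ∈ ball (0:ℂ) 1, z ≠ 0 → g z = f z / z)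
    (hgne1 : ¬ (∀ z ∈ ball (0:ℂ) 1, g z = 1)) :
    ∃ n : ℕ, 1 ≤ n ∧
      Subord g (fun z => Complex.exp (((lam / n : ℝ) : ℂ) * Complex.log (1 + z ^ n))) := by
  have hball0 : (0:ℂ) ∈ ball (0:ℂ) 1 := by simp
  -- g agrees with dslope f 0 on the ball
  have hgeq : ∀ z ∈ ball (0:ℂ) 1, g z = dslope f 0 z := by
    intro z hz
    rcases eq_or_ne z 0 with rfl | hzne
    · rw [dslope_same, hfd0, hg0]
    · rw [hgval z hz hzne, dslope_of_ne f hzne, slope_def_field, hf0, sub_zero, sub_zero]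
  -- dslope f 0 is differentiable on the ball
  have hfa : AnalyticOnNhd ℂ f (ball 0 1) := hf.analyticOnNhd isOpen_ball
  have hdsl : DifferentiableOn ℂ (dslope f 0) (ball 0 1) := by
    intro z hz
    rcases eq_or_ne z 0 with rfl | hzne
    · obtain ⟨p, hp⟩ := hfa 0 hz
      exact (hp.has_fpower_series_dslope_fslope.differentiableAt).differentiableWithinAt
    · have hopen : IsOpen (ball (0:ℂ) 1 ∩ {w | w ≠ 0}) :=
        isOpen_ball.inter isOpen_ne
      have hmem : z ∈ ball (0:ℂ) 1 ∩ {w | w ≠ 0} := ⟨hz, hzne⟩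
      have heq : (fun w => f w / w) =ᶠ[nhds z] dslope f 0 := by
        filter_upwards [hopen.mem_nhds hmem] with w hw
        rw [dslope_of_ne f hw.2, slope_def_field, hf0, sub_zero, sub_zero]
      have hdiv : DifferentiableAt ℂ (fun w => f w / w) z :=
        (hf.differentiableAt (isOpen_ball.mem_nhds hz)).div differentiableAt_id hzne
      exact (hdiv.congr_of_eventuallyEq heq.symm).differentiableWithinAt
  have hgd : DifferentiableOn ℂ g (ball 0 1) := hdsl.congr hgeq
  -- g is nonvanishing
  have hgnz : ∀ z ∈ ball (0:ℂ) 1, g z ≠ 0 := by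
    intro z hz
    rcases eq_or_ne z 0 with rfl | hzne
    · rw [hg0]; exact one_ne_zero
    · rw [hgval z hz hzne]
      exact div_ne_zero (hfne z hz hzne) hzne
  obtain ⟨L, hL0, hLd, hLexp⟩ := exists_log_s4 g hgd hg0 hgnz
  -- key inequality for z * g'/g
  have key : ∀ z ∈ ball (0:ℂ) 1, (z * (deriv g z / g z)).re < lam / 2 := by
    intro z hz
    rcases eq_or_ne z 0 with rfl | hzne
    · simp only [zero_mul, Complex.zero_re]
      positivity
    · -- derivative of g at z
      have hopen : IsOpen (ball (0:ℂ) 1 ∩ {w | w ≠ 0}) := isOpen_ball.inter isOpen_ne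
      have hmem : z ∈ ball (0:ℂ) 1 ∩ {w | w ≠ 0} := ⟨hz, hzne⟩
      have heq : (fun w => f w / w) =ᶠ[nhds z] g := by
        filter_upwards [hopen.mem_nhds hmem] with w hw
        rw [hgval w hw.1 hw.2]
      have hfz : HasDerivAt f (deriv f z) z :=
        (hf.differentiableAt (isOpen_ball.mem_nhds hz)).hasDerivAt
      have hgz : HasDerivAt g ((deriv f z * z - f z * 1) / z ^ 2) z :=
        (hfz.div (hasDerivAt_id z) hzne).congr_of_eventuallyEq heq.symm
      have hderiv : deriv g z = (deriv f z * z - f z) / z ^ 2 := by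
        rw [hgz.deriv]; ring_nf
      have hfzne : f z ≠ 0 := hfne z hz hzne
      have hval : z * (deriv g z / g z) = z * deriv f z / f z - 1 := by
        rw [hderiv, hgval z hz hzne]
        field_simp
      rw [hval, Complex.sub_re, Complex.one_re]
      have := hN z hz
      linarith
  -- define H = exp(L/lam)
  set lamC : ℂ := (lam : ℂ) with hlamCdef
  have hlamne : lamC ≠ 0 := by
    simp only [hlamCdef, ne_eq, Complex.ofReal_eq_zero]
    exact ne_of_gt hlam0
  set H : ℂ → ℂ := fun z => Complex.exp (L z / lamC) with hHdef
  have hH0 : H 0 = 1 := by rw [hHdef]; simp [hL0]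
  have hHd : ∀ z ∈ ball (0:ℂ) 1, HasDerivAt H (Complex.exp (L z / lamC) *
      (deriv g z / g z / lamC)) z := by
    intro z hz
    exact ((hLd z hz).div_const lamC).cexp
  have hHdiff : DifferentiableOn ℂ H (ball 0 1) :=
    fun z hz => ((hHd z hz).differentiableAt).differentiableWithinAt
  have hHne : ∀ z ∈ ball (0:ℂ) 1, H z ≠ 0 := fun z _ => Complex.exp_ne_zero _
  have hHre : ∀ z ∈ ball (0:ℂ) 1, (z * deriv H z / H z).re < 1/2 := by
    intro z hz
    have hrw : z * deriv H z / H z = ((lam⁻¹ : ℝ) : ℂ) * (z * (deriv g z / g z)) := by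
      rw [(hHd z hz).deriv]
      have hexpne : Complex.exp (L z / lamC) ≠ 0 := Complex.exp_ne_zero _
      rw [hHdef]
      simp only []
      rw [show z * (Complex.exp (L z / lamC) * (deriv g z / g z / lamC)) /
            Complex.exp (L z / lamC)
          = (Complex.exp (L z / lamC) / Complex.exp (L z / lamC)) *
            (z * (deriv g z / g z / lamC)) by ring,
        div_self hexpne, one_mul, hlamCdef]
      push_cast
      ring
    rw [hrw, Complex.re_ofReal_mul]
    have hk := key z hz
    calc lam⁻¹ * (z * (deriv g z / g z)).re < lam⁻¹ * (lam / 2) := by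
          apply mul_lt_mul_of_pos_left hk
          positivity
      _ = 1/2 := by field_simp
  have hJack := jack_lemma H hHdiff hH0 hHne hHre
  -- imaginary part of L/lam stays in (-pi/2, pi/2)
  have hcos : ∀ z ∈ ball (0:ℂ) 1, 0 < Real.cos ((L z / lamC).im) := by
    intro z hz
    have h1 : ‖H z - 1‖ < 1 := hJack z hz
    have h2 : |(H z).re - 1| ≤ ‖H z - 1‖ := by
      rw [show (H z).re - 1 = (H z - 1).re by simp]
      exact Complex.abs_re_le_norm _
    have hrepos : 0 < (H z).re := by
      rcases abs_lt.1 (lt_of_le_of_lt h2 h1) with ⟨ha, _⟩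
      linarith
    rw [hHdef] at hrepos
    simp only [] at hrepos
    rw [Complex.exp_re] at hrepos
    nlinarith [Real.exp_pos ((L z / lamC).re)]
  have hLcont : ContinuousOn (fun z => (L z / lamC).im) (ball 0 1) := by
    apply Complex.continuous_im.comp_continuousOn
    apply ContinuousOn.div_const
    exact fun z hz => ((hLd z hz).differentiableAt).continuousAt.continuousWithinAt
  have himg : ∀ z ∈ ball (0:ℂ) 1, (L z / lamC).im ∈ Ioo (-(Real.pi/2)) (Real.pi/2) := by
    have hpre : IsPreconnected ((fun z => (L z / lamC).im) '' ball 0 1) :=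
      ((convex_ball (0:ℂ) 1).isPreconnected).image _ hLcont
    have h0img : (0:ℝ) ∈ (fun z => (L z / lamC).im) '' ball 0 1 := by
      refine ⟨0, hball0, ?_⟩
      simp [hL0]
    intro z hz
    have hzimg : (L z / lamC).im ∈ (fun z => (L z / lamC).im) '' ball 0 1 :=
      ⟨z, hz, rfl⟩
    by_contra hcon
    rw [mem_Ioo] at hcon
    push_neg at hcon
    rcases le_or_gt (Real.pi/2) ((L z / lamC).im) with hge | hlt
    · have hsub := hpre.Icc_subset h0img hzimg
      have : Real.pi/2 ∈ Icc (0:ℝ) ((L z / lamC).im) :=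
        ⟨by positivity, hge⟩
      obtain ⟨w, hw, hweq⟩ := hsub this
      have hcw := hcos w hw
      have hweq' : (L w / lamC).im = Real.pi/2 := hweq
      rw [hweq', Real.cos_pi_div_two] at hcw
      exact lt_irrefl 0 hcw
    · have hle : (L z / lamC).im ≤ -(Real.pi/2) := by
        by_contra hgt
        push_neg at hgt
        exact absurd (hcon hgt) (not_le.2 hlt)
      have hsub := hpre.Icc_subset hzimg h0img
      have : -(Real.pi/2) ∈ Icc ((L z / lamC).im) (0:ℝ) :=
        ⟨hle, by simp; positivity⟩
      obtain ⟨w, hw, hweq⟩ := hsub this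
      have hcw := hcos w hw
      have hweq' : (L w / lamC).im = -(Real.pi/2) := hweq
      rw [hweq', Real.cos_neg, Real.cos_pi_div_two] at hcw
      exact lt_irrefl 0 hcw
  -- the subordinating function
  refine ⟨1, le_refl 1, fun z => H z - 1, ?_, ?_, ?_, ?_⟩
  · exact hHdiff.sub_const 1
  · intro z hz
    rw [mem_ball, dist_zero_right]
    exact hJack z hz
  · show H 0 - 1 = 0
    rw [hH0]; ring
  · intro z hz
    show g z = Complex.exp (((lam / (1:ℕ) : ℝ) : ℂ) * Complex.log (1 + (H z - 1) ^ 1))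
    have h1 : (1:ℂ) + (H z - 1) ^ 1 = H z := by ring
    rw [h1]
    have hlog : Complex.log (H z) = L z / lamC := by
      rw [hHdef]
      apply Complex.log_exp
      · have := (himg z hz).1
        have hpi : Real.pi/2 < Real.pi := by linarith [Real.pi_pos]
        linarith
      · have := (himg z hz).2
        linarith [Real.pi_pos]
    rw [hlog]
    have hcast : ((lam / (1:ℕ) : ℝ) : ℂ) = lamC := by
      rw [hlamCdef]; norm_num
    rw [hcast]
    rw [mul_div_cancel₀ _ hlamne]
    exact (hLexp z hz).symm
end
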